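/- The function g(t) = cot(1/t) is strictly concave on the interval (1/π, ∞). -/

import Mathlib

open Real Set

private lemma sin_sub_mul_cos_pos {u : ℝ} (h0 : 0 < u) (hπ : u < π) :
    0 < Real.sin u - u * Real.cos u := by
  rcases lt_or_ge u (π / 2) with h | h
  · have hc : 0 < Real.cos u := Real.cos_pos_of_mem_Ioo ⟨by linarith [Real.pi_pos], h⟩
    have ht : u < Real.tan u := Real.lt_tan h0 h
    rw [Real.tan_eq_sin_div_cos] at ht
    have := (lt_div_iff₀ hc).mp ht
    nlinarith
  · have hs : 0 < Real.sin u := Real.sin_pos_of_pos_of_lt_pi h0 hπ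
    have hc : Real.cos u ≤ 0 := Real.cos_nonpos_of_pi_div_two_le_of_le h
      (by linarith [Real.pi_pos])
    nlinarith

private lemma hasDerivAt_cot {x : ℝ} (hx : Real.sin x ≠ 0) :
    HasDerivAt Real.cot (-1 / Real.sin x ^ 2) x := by
  have h : HasDerivAt (fun y => Real.cos y / Real.sin y)
      ((-Real.sin x * Real.sin x - Real.cos x * Real.cos x) / Real.sin x ^ 2) x :=
    (Real.hasDerivAt_cos x).div (Real.hasDerivAt_sin x) hx
  have heq : (-Real.sin x * Real.sin x - Real.cos x * Real.cos x) / Real.sin x ^ 2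
      = -1 / Real.sin x ^ 2 := by
    rw [div_eq_div_iff (by positivity) (by positivity)]
    nlinarith [Real.sin_sq_add_cos_sq x]
  rw [heq] at h
  exact h.congr_of_eventuallyEq (Filter.Eventually.of_forall fun y => (Real.cot_eq_cos_div_sin y))

/-- The function `g(t) = cot (1/t)` is strictly concave on `(1/π, ∞)`. -/
theorem cot_inv_strictConcaveOn :
    StrictConcaveOn ℝ (Set.Ioi (π⁻¹)) (fun t : ℝ => Real.cot t⁻¹) := by
  have hπ := Real.pi_pos
  -- basic facts for t in the set
  have key : ∀ t ∈ Set.Ioi (π⁻¹), 0 < t ∧ 0 < t⁻¹ ∧ t⁻¹ < π ∧ Real.sin t⁻¹ ≠ 0 := by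
    intro t ht
    have ht0 : 0 < t := lt_trans (by positivity) ht
    have h1 : 0 < t⁻¹ := by positivity
    have h2 : t⁻¹ < π := by
      rw [inv_lt_comm₀ ht0 hπ] at *
      exact Set.mem_Ioi.mp ht
    exact ⟨ht0, h1, h2, ne_of_gt (Real.sin_pos_of_pos_of_lt_pi h1 h2)⟩
  set g1 : ℝ → ℝ := fun t => (t ^ 2 * Real.sin t⁻¹ ^ 2)⁻¹ with hg1
  -- first derivative
  have hd1 : ∀ t ∈ Set.Ioi (π⁻¹), HasDerivAt (fun t : ℝ => Real.cot t⁻¹) (g1 t) t := by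
    intro t ht
    obtain ⟨ht0, h1, h2, hs⟩ := key t ht
    have h := (hasDerivAt_cot hs).comp t (hasDerivAt_inv (ne_of_gt ht0))
    refine h.congr_deriv ?_
    have hs2 : (0:ℝ) < Real.sin t⁻¹ ^ 2 := by positivity
    rw [hg1]
    field_simp
  -- derivative of g1
  have hd2 : ∀ t ∈ Set.Ioi (π⁻¹),
      HasDerivAt g1 (-(2 * t * Real.sin t⁻¹ ^ 2 + t ^ 2 * (2 * Real.sin t⁻¹ * (Real.cos t⁻¹ * (-(t ^ 2)⁻¹)))) / (t ^ 2 * Real.sin t⁻¹ ^ 2) ^ 2) t := by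
    intro t ht
    obtain ⟨ht0, h1, h2, hs⟩ := key t ht
    have hp : HasDerivAt (fun t : ℝ => t ^ 2 * Real.sin t⁻¹ ^ 2)
        (2 * t * Real.sin t⁻¹ ^ 2 + t ^ 2 * (2 * Real.sin t⁻¹ * (Real.cos t⁻¹ * (-(t ^ 2)⁻¹)))) t := by
      have hsin : HasDerivAt (fun t : ℝ => Real.sin t⁻¹) (Real.cos t⁻¹ * (-(t ^ 2)⁻¹)) t :=
        (Real.hasDerivAt_sin t⁻¹).comp t (hasDerivAt_inv (ne_of_gt ht0))
      have h2' : HasDerivAt (fun t : ℝ => Real.sin t⁻¹ ^ 2)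
          (2 * Real.sin t⁻¹ * (Real.cos t⁻¹ * (-(t ^ 2)⁻¹))) t := by
        have := hsin.pow 2
        refine this.congr_deriv ?_; ring
      have ht2 : HasDerivAt (fun t : ℝ => t ^ 2) (2 * t) t := by
        simpa using (hasDerivAt_pow 2 t)
      exact ht2.mul h2'
    have hne : t ^ 2 * Real.sin t⁻¹ ^ 2 ≠ 0 := by positivity
    exact hp.inv hne
  -- apply the second-derivative criterion
  apply strictConcaveOn_of_deriv2_neg (convex_Ioi _)
  · -- continuity
    apply ContinuousOn.congr (f := fun t : ℝ => Real.cos t⁻¹ / Real.sin t⁻¹)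
    · apply ContinuousOn.div
      · exact Real.continuous_cos.comp_continuousOn
          (continuousOn_inv₀.mono (fun x hx => ne_of_gt (key x hx).1))
      · exact Real.continuous_sin.comp_continuousOn
          (continuousOn_inv₀.mono (fun x hx => ne_of_gt (key x hx).1))
      · exact fun x hx => (key x hx).2.2.2
    · exact fun x hx => Real.cot_eq_cos_div_sin _
  · intro t ht
    rw [interior_Ioi] at ht
    obtain ⟨ht0, h1, h2, hs⟩ := key t ht
    -- deriv f = g1 near t
    have hev : deriv (fun t : ℝ => Real.cot t⁻¹) =ᶠ[nhds t] g1 := by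
      filter_upwards [isOpen_Ioi.mem_nhds ht] with x hx
      exact (hd1 x hx).deriv
    simp only [Function.iterate_succ_apply', Function.iterate_zero, id_eq]
    rw [hev.deriv_eq, (hd2 t ht).deriv]
    -- sign
    have hspos : 0 < Real.sin t⁻¹ := Real.sin_pos_of_pos_of_lt_pi h1 h2
    have hkey : 0 < Real.sin t⁻¹ - t⁻¹ * Real.cos t⁻¹ := sin_sub_mul_cos_pos h1 h2
    have hnum : 0 < 2 * t * Real.sin t⁻¹ ^ 2 + t ^ 2 * (2 * Real.sin t⁻¹ * (Real.cos t⁻¹ * (-(t ^ 2)⁻¹))) := by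
      have h2t : t ^ 2 * (t ^ 2)⁻¹ = 1 := by field_simp
      have : 2 * t * Real.sin t⁻¹ ^ 2 + t ^ 2 * (2 * Real.sin t⁻¹ * (Real.cos t⁻¹ * (-(t ^ 2)⁻¹)))
          = 2 * Real.sin t⁻¹ * (t * Real.sin t⁻¹ - Real.cos t⁻¹) := by
        field_simp; ring
      rw [this]
      have : t * Real.sin t⁻¹ - Real.cos t⁻¹ = t * (Real.sin t⁻¹ - t⁻¹ * Real.cos t⁻¹) := by
        field_simp
      rw [this]
      positivity
    have hden : 0 < (t ^ 2 * Real.sin t⁻¹ ^ 2) ^ 2 := by positivity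
    exact div_neg_of_neg_of_pos (by linarith) hden
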